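/- arXiv:math/0309267 — 2 statements merged into one kernel-verified Lean document; each statement's English description precedes it below -/
import Mathlib

section
/- Let (R,m,k) be a Noetherian local ring and M an R-module such that Tor_1^R(M, N) = 0 for all finite-length R-modules N. Then for every m-primary ideal I of R and every x ∈ R, one has (I·M :_M x) = (I :_R x)·M; in particular if M = S is an R-algebra, I·S :_S x = (I :_R x)·S. -/
open IsLocalRing CategoryTheory TensorProduct

universe u

/-- The length of an `R`-module, encoded as the Krull dimension of its lattice of submodules. -/
noncomputable def moduleLength (R M : Type*) [CommRing R] [AddCommGroup M] [Module R M] :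
    WithBot ℕ∞ :=
  Order.krullDim (Submodule R M)

/-- The Frobenius power `I^[q]`, the ideal generated by `q`-th powers of elements of `I`. -/
def frobPow {R : Type*} [CommRing R] (I : Ideal R) (q : ℕ) : Ideal R :=
  Ideal.span ((fun x => x ^ q) '' (I : Set R))

/-- A Noetherian local ring is regular if its maximal ideal is generated by `dim R` elements. -/
def IsRegularLocalRing' (R : Type*) [CommRing R] [IsLocalRing R] : Prop :=
  IsNoetherianRing R ∧ ∃ s : Finset R,
    Ideal.span (s : Set R) = maximalIdeal R ∧ (s.card : WithBot ℕ∞) = ringKrullDim R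

/-- Flatness of a ring homomorphism. -/
def RingHom.IsFlatHom {R S : Type*} [CommRing R] [CommRing S] (f : R →+* S) : Prop :=
  @Module.Flat R S _ _ (Module.compHom S f)

/-- A (Noetherian) ring is regular if all of its localizations at primes are regular local. -/
def IsRegularRing' (R : Type u) [CommRing R] : Prop :=
  IsNoetherianRing R ∧ ∀ (p : Ideal R) [p.IsPrime], IsRegularLocalRing' (Localization.AtPrime p)

/-- A `k`-algebra is geometrically regular if it stays regular after base change to any
finite field extension of `k`. -/
def IsGeomRegular (k : Type u) [Field k] (A : Type u) [CommRing A] [Algebra k A] : Prop :=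
  ∀ (K : Type u) [Field K] [Algebra k K], Module.Finite k K → IsRegularRing' (K ⊗[k] A)

/-- A ring is catenary if any two saturated chains of primes with the same endpoints
have the same length. -/
def IsCatenary (R : Type u) [CommRing R] : Prop :=
  ∀ c₁ c₂ : LTSeries (PrimeSpectrum R),
    c₁.head = c₂.head → c₁.last = c₂.last →
    (∀ i : Fin c₁.length, c₁.toFun i.castSucc ⋖ c₁.toFun i.succ) →
    (∀ i : Fin c₂.length, c₂.toFun i.castSucc ⋖ c₂.toFun i.succ) →
    c₁.length = c₂.length

/-- A ring is universally catenary if every finitely generated algebra over it is catenary. -/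
def IsUniversallyCatenary (R : Type u) [CommRing R] : Prop :=
  ∀ (S : Type u) [CommRing S] [Algebra R S], Algebra.FiniteType R S → IsCatenary S

/-- J-2: the regular locus of every finitely generated algebra is open. -/
def IsJ2 (R : Type u) [CommRing R] : Prop :=
  ∀ (S : Type u) [CommRing S] [Algebra R S], Algebra.FiniteType R S →
    IsOpen {p : PrimeSpectrum S | IsRegularLocalRing' (Localization.AtPrime p.asIdeal)}

/-- G-ring: for each prime `p`, the formal fibers of `R_p` are geometrically regular. -/
def IsGRing (R : Type u) [CommRing R] : Prop :=
  ∀ (p : Ideal R) [p.IsPrime],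
    ∀ (q : Ideal (Localization.AtPrime p)) [q.IsPrime],
      IsGeomRegular (ResidueField (Localization.AtPrime q))
        ((ResidueField (Localization.AtPrime q)) ⊗[Localization.AtPrime p]
          (AdicCompletion (maximalIdeal (Localization.AtPrime p)) (Localization.AtPrime p)))

/-- Excellent ring: Noetherian, universally catenary, G-ring, and J-2. -/
def IsExcellentRing (R : Type u) [CommRing R] : Prop :=
  IsNoetherianRing R ∧ IsUniversallyCatenary R ∧ IsGRing R ∧ IsJ2 R

/-- `S` is a ring of `q`-th roots of `R`: the `q`-th power map on `S` is injective with image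
exactly (the image of) `R`. -/
structure IsQthRootRing (R S : Type*) [CommRing R] [CommRing S] [Algebra R S] (q : ℕ) :
    Prop where
  inj : Function.Injective (algebraMap R S)
  pow_inj : Function.Injective fun s : S => s ^ q
  pow_surj : ∀ s : S, ∃ r : R, s ^ q = algebraMap R S r

/-- An `R`-module has no free direct summand iff it admits no surjection onto `R`. -/
def NoFreeSummands (R M : Type*) [CommRing R] [AddCommGroup M] [Module R M] : Prop :=
  ∀ f : M →ₗ[R] R, ¬ Function.Surjective f

/-- `R` is F-finite: `R` is module-finite over itself via the Frobenius endomorphism. -/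
def IsFFinite (R : Type*) [CommRing R] (p : ℕ) [Fact p.Prime] [CharP R p] : Prop :=
  @Module.Finite R R _ _ (Module.compHom R (frobenius R p))

/-- A non-increasing sequence of irreducible `m`-primary ideals `I t`, cofinal with the powers
of the maximal ideal, together with compatibly chosen socle representatives `u t`. -/
def SocleSeq (R : Type*) [CommRing R] [IsLocalRing R] (I : ℕ → Ideal R) (u : ℕ → R) : Prop :=
  Antitone I ∧
  (∀ n : ℕ, ∃ t, I t ≤ maximalIdeal R ^ n) ∧
  (∀ t, I t ≤ maximalIdeal R) ∧
  (∀ t, ∃ n, maximalIdeal R ^ n ≤ I t) ∧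
  (∀ t, ∀ J K : Ideal R, I t = J ⊓ K → I t = J ∨ I t = K) ∧
  (∀ t, u t ∉ I t) ∧
  (∀ t, ∀ r ∈ maximalIdeal R, r * u t ∈ I t) ∧
  (∀ t, ∃ c : R, (∀ x ∈ I t, x * c ∈ I (t + 1)) ∧
      (∀ x : R, x * c ∈ I (t + 1) → x ∈ I t) ∧ u (t + 1) - u t * c ∈ I (t + 1))


/-! ### Auxiliary material for the proof -/

section TorVanishingAux

open CategoryTheory.Limits CategoryTheory.Projective CategoryTheory.MonoidalCategory

universe v

variable {A : Type v} [CommRing A]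

noncomputable instance : CategoryTheory.Projective (ModuleCat.of A A) :=
  ModuleCat.projective_of_free (Module.Basis.singleton PUnit.{v+1} A)

variable (J : Ideal A)

/-- The quotient map `A → A/J` as a morphism in `ModuleCat`. -/
noncomputable def auxQJ : ModuleCat.of A A ⟶ ModuleCat.of A (A ⧸ J) := ModuleCat.ofHom J.mkQ

instance : CategoryTheory.Epi (auxQJ J) :=
  (ModuleCat.epi_iff_surjective _).2 (Submodule.mkQ_surjective J)

/-- A projective resolution of `A/J` beginning with the free module `A`. -/
noncomputable def auxComplex : ChainComplex (ModuleCat.{v} A) ℕ :=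
  ChainComplex.mk' (ModuleCat.of A A) (Projective.syzygies (auxQJ J)) (Projective.d (auxQJ J))
    (fun f => ⟨_, Projective.d f, by
      exact (Category.assoc _ _ _).trans ((congrArg _ (kernel.condition f)).trans comp_zero)⟩)

lemma auxComplex_d_1_0 : (auxComplex J).d 1 0 = Projective.d (auxQJ J) := by
  exact ChainComplex.mk'_d_1_0 ..

lemma auxComplex_exactAt_succ (n : ℕ) : (auxComplex J).ExactAt (n + 1) := by
  rw [HomologicalComplex.exactAt_iff' _ (n + 1 + 1) (n + 1) n (by simp) (by simp)]
  have hE := CategoryTheory.exact_d_f (C := ModuleCat.{v} A) ((auxComplex J).d (n + 1) n)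
  refine ShortComplex.exact_of_iso ?_ hE
  refine ShortComplex.isoMk (ChainComplex.mk'XIso (ModuleCat.of A A) (Projective.syzygies (auxQJ J))
    (Projective.d (auxQJ J)) (fun f => ⟨_, Projective.d f,
      (Category.assoc _ _ _).trans ((congrArg _ (kernel.condition f)).trans comp_zero)⟩) n).symm (Iso.refl _) (Iso.refl _) ?_ ?_
  · refine ((congrArg _ (ChainComplex.mk'_d _ _ _ _ n)).trans (Iso.inv_hom_id_assoc _ _)).trans ?_
    exact (Category.comp_id _).symm
  · exact (Category.id_comp _).trans (Category.comp_id _).symm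

instance (n : ℕ) : CategoryTheory.Projective ((auxComplex J).X n) := by
  obtain (_ | _ | _ | n) := n
  · exact (inferInstance : CategoryTheory.Projective (ModuleCat.of A A))
  all_goals apply CategoryTheory.Projective.projective_over

/-- The resolution `auxComplex` packaged as a `ProjectiveResolution`. -/
noncomputable def auxRes : CategoryTheory.ProjectiveResolution (ModuleCat.of A (A ⧸ J)) where
  complex := auxComplex J
  π := (ChainComplex.toSingle₀Equiv _ _).symm ⟨auxQJ J, by
          rw [auxComplex_d_1_0]
          exact (Category.assoc _ _ _).trans ((congrArg _ (kernel.condition _)).trans comp_zero)⟩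
  quasiIso := ⟨fun n => by
    cases n
    · rw [ChainComplex.quasiIsoAt₀_iff, CategoryTheory.ShortComplex.quasiIso_iff_of_zeros']
      · refine (CategoryTheory.ShortComplex.exact_and_epi_g_iff_of_iso ?_).2
          ⟨CategoryTheory.exact_d_f (auxQJ J), by dsimp; infer_instance⟩
        exact CategoryTheory.ShortComplex.isoMk (CategoryTheory.Iso.refl _)
          (CategoryTheory.Iso.refl _) (CategoryTheory.Iso.refl _)
          ((Category.id_comp _).trans (Category.comp_id _).symm)
          ((Category.id_comp _).trans (Category.comp_id _).symm)
      all_goals rfl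
    · rw [quasiIsoAt_iff_exactAt']
      · apply auxComplex_exactAt_succ
      · apply ChainComplex.exactAt_succ_single_obj⟩

lemma auxRange (r : A) (hr : r ∈ J) :
    ∃ p : (auxComplex J).X 1, ((auxComplex J).d 1 0) p = r := by
  have hex := CategoryTheory.exact_d_f (auxQJ J)
  rw [CategoryTheory.ShortComplex.moduleCat_exact_iff] at hex
  obtain ⟨p, hp⟩ := hex r (by
    show J.mkQ r = 0
    rw [Submodule.mkQ_apply, Submodule.Quotient.mk_eq_zero]
    exact hr)
  exact ⟨p, by rw [auxComplex_d_1_0]; exact hp⟩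

lemma auxMemJ (p : (auxComplex J).X 1) : ((auxComplex J).d 1 0) p ∈ J := by
  have h0 : (auxComplex J).d 1 0 ≫ auxQJ J = 0 := by
    rw [auxComplex_d_1_0]
    exact (Category.assoc _ _ _).trans ((congrArg _ (kernel.condition _)).trans comp_zero)
  have h1 : J.mkQ (((auxComplex J).d 1 0) p) = 0 := by
    exact congrArg (fun g => g.hom p) h0
  exact (Submodule.Quotient.mk_eq_zero _).1 h1

lemma auxTensorExact (M : Type v) [AddCommGroup M] [Module A M]
    (htor : Subsingleton (((Tor (ModuleCat.{v} A) 1).obj (ModuleCat.of A M)).obj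
        (ModuleCat.of A (A ⧸ J)))) :
    ∀ z : TensorProduct A M ((auxComplex J).X 1),
      LinearMap.lTensor M (((auxComplex J).d 1 0).hom : _ →ₗ[A] A) z = 0 →
      ∃ v : TensorProduct A M ((auxComplex J).X 2),
        LinearMap.lTensor M ((auxComplex J).d 2 1).hom v = z := by
  set F := (tensoringLeft (ModuleCat.{v} A)).obj (ModuleCat.of A M) with hF
  have iso := (auxRes J).isoLeftDerivedObj F 1
  have hres : (auxRes J).complex = auxComplex J := rfl
  rw [hres] at iso
  set KK := (F.mapHomologicalComplex (ComplexShape.down ℕ)).obj (auxComplex J) with hKK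
  have hsub : Subsingleton
      ((HomologicalComplex.homologyFunctor (ModuleCat.{v} A) _ 1).obj KK) :=
    @Equiv.subsingleton _ _
      ((CategoryTheory.forget (ModuleCat.{v} A)).mapIso iso).toEquiv.symm htor
  have hz : IsZero (KK.homology 1) := @ModuleCat.isZero_of_subsingleton _ _ _ hsub
  have hexact : KK.ExactAt 1 := (HomologicalComplex.exactAt_iff_isZero_homology _ _).2 hz
  rw [HomologicalComplex.exactAt_iff' KK 2 1 0 (by simp) (by simp)] at hexact
  rw [CategoryTheory.ShortComplex.moduleCat_exact_iff] at hexact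
  intro z hz0
  exact hexact z hz0

theorem auxArtinianOfTorsion (M : Type v) [AddCommGroup M] [Module A M] [Module.Finite A M]
    {m : Ideal A} (hm : m.IsMaximal)
    (htor : Module.IsTorsionBySet A M (m : Set A)) : IsArtinian A M := by
  letI : Field (A ⧸ m) := Ideal.Quotient.field m
  letI kMod : Module (A ⧸ m) M := htor.module
  haveI : IsScalarTower A (A ⧸ m) M := htor.isScalarTower
  haveI : Module.Finite (A ⧸ m) M := Module.Finite.of_restrictScalars_finite A (A ⧸ m) M
  haveI hart : IsArtinian (A ⧸ m) M := isArtinian_of_fg_of_artinian'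
  let g : Submodule A M → Submodule (A ⧸ m) M := fun p =>
    { carrier := p
      add_mem' := fun ha hb => p.add_mem ha hb
      zero_mem' := p.zero_mem
      smul_mem' := by
        rintro c y hy
        obtain ⟨r, rfl⟩ := Ideal.Quotient.mk_surjective c
        show (Ideal.Quotient.mk m r) • y ∈ p
        rw [htor.mk_smul]
        exact p.smul_mem r hy }
  have hg : StrictMono g := by
    intro p q hpq
    rw [lt_iff_le_and_ne] at hpq ⊢
    refine ⟨fun a ha => hpq.1 ha, fun hc => hpq.2 ?_⟩
    ext y
    exact ⟨fun hy => (congrArg (fun s => y ∈ s) hc ▸ hy : y ∈ g q),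
      fun hy => (congrArg (fun s => y ∈ s) hc.symm ▸ hy : y ∈ g p)⟩
  exact hg.wellFoundedLT

theorem auxArtinianPow [IsLocalRing A] [IsNoetherianRing A] :
    ∀ n : ℕ, IsArtinian A (A ⧸ (maximalIdeal A ^ n : Ideal A)) := by
  intro n
  induction n with
  | zero =>
    haveI : Subsingleton (A ⧸ (maximalIdeal A ^ 0 : Ideal A)) := by
      rw [pow_zero]
      exact Submodule.Quotient.subsingleton_iff.mpr (by simp [Ideal.one_eq_top])
    infer_instance
  | succ n ih =>
    set mn1 : Ideal A := maximalIdeal A ^ (n + 1)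
    set S : Submodule A (A ⧸ (mn1 : Submodule A A)) :=
      Submodule.map mn1.mkQ (maximalIdeal A ^ n : Ideal A) with hS
    rw [isArtinian_iff_submodule_quotient S]
    constructor
    · haveI : Module.Finite A S := by
        haveI : IsNoetherian A (A ⧸ (mn1 : Submodule A A)) := inferInstance
        exact Module.Finite.iff_fg.2 (IsNoetherian.noetherian S)
      refine auxArtinianOfTorsion (↥S) (maximalIdeal.isMaximal A) ?_
      rintro ⟨y, hy⟩ ⟨r, hr⟩
      obtain ⟨t, ht, rfl⟩ := hy
      ext
      show r • (mn1.mkQ t) = 0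
      rw [← map_smul, Submodule.mkQ_apply, Submodule.Quotient.mk_eq_zero]
      have : r • t ∈ maximalIdeal A ^ n * maximalIdeal A :=
        smul_eq_mul r t ▸ mul_comm t r ▸ Ideal.mul_mem_mul ht hr
      rwa [← pow_succ] at this
    · have e := Submodule.quotientQuotientEquivQuotient (mn1 : Submodule A A)
        (maximalIdeal A ^ n : Ideal A) (Ideal.pow_le_pow_right (Nat.le_succ n))
      exact isArtinian_of_linearEquiv e.symm

theorem auxFinLength [IsLocalRing A] [IsNoetherianRing A] {n : ℕ}
    (hn : maximalIdeal A ^ n ≤ J) : IsFiniteLength A (A ⧸ J) := by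
  rw [isFiniteLength_iff_isNoetherian_isArtinian]
  refine ⟨inferInstance, ?_⟩
  haveI := auxArtinianPow (A := A) n
  exact isArtinian_of_surjective _ (Submodule.mapQ _ _ LinearMap.id hn)
    (fun z => Quotient.inductionOn' z (fun r => ⟨Submodule.Quotient.mk r, rfl⟩))

end TorVanishingAux

/-- If `Tor₁^R(M,N) = 0` for all finite-length `N`, then for every `m`-primary ideal `I`
and every `x ∈ R`, `(I·M :_M x) = (I :_R x)·M`. -/
theorem colon_smul_of_tor_vanishing (R : Type u) [CommRing R] [IsLocalRing R]
    [IsNoetherianRing R] (M : Type u) [AddCommGroup M] [Module R M]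
    (h : ∀ (N : Type u) [AddCommGroup N] [Module R N], IsFiniteLength R N →
      Subsingleton (((Tor (ModuleCat.{u} R) 1).obj (ModuleCat.of R M)).obj
        (ModuleCat.of R N)))
    (I : Ideal R) (hI₁ : I ≤ maximalIdeal R) (hI₂ : ∃ n, maximalIdeal R ^ n ≤ I) (x : R) :
    (I • (⊤ : Submodule R M)).comap (LinearMap.lsmul R M x) =
      (I.colon (Ideal.span {x})) • (⊤ : Submodule R M) := by
  classical
  apply le_antisymm
  · -- hard direction
    intro m hm
    rw [Submodule.mem_comap, LinearMap.lsmul_apply] at hm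
    set K := I.colon (Ideal.span {x}) with hKdef
    set JS : Ideal R := I ⊔ Ideal.span {x} with hJSdef
    obtain ⟨n, hn⟩ := hI₂
    have hfl : IsFiniteLength R (R ⧸ JS) :=
      auxFinLength JS (le_trans hn le_sup_left)
    have htor := h (R ⧸ JS) hfl
    have hex := auxTensorExact JS M htor
    -- the multiplication-by-`x` map `R/(I:x) → R/I`
    let s : (R ⧸ (K : Submodule R R)) →ₗ[R] (R ⧸ (I : Submodule R R)) :=
      Submodule.mapQ _ _ (LinearMap.toSpanSingleton R R x) (fun r hr => by
        rw [Submodule.mem_comap, LinearMap.toSpanSingleton_apply, smul_eq_mul]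
        exact Ideal.mem_colon_span_singleton.1 hr)
    have hsmk : ∀ r : R, s (Submodule.Quotient.mk r) = Submodule.Quotient.mk (r • x) := by
      intro r
      rw [Submodule.mapQ_apply, LinearMap.toSpanSingleton_apply]
    have hs : Function.Injective s := by
      rw [← LinearMap.ker_eq_bot, eq_bot_iff]
      intro z hz
      obtain ⟨r, rfl⟩ := Submodule.Quotient.mk_surjective _ z
      rw [LinearMap.mem_ker, hsmk, Submodule.Quotient.mk_eq_zero] at hz
      rw [Submodule.mem_bot, Submodule.Quotient.mk_eq_zero]
      exact Ideal.mem_colon_span_singleton.2 (by rwa [smul_eq_mul] at hz)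
    set D1 : ((auxComplex JS).X 1 : Type u) →ₗ[R] R := ((auxComplex JS).d 1 0).hom
      with hD1def
    have hmemrange : ∀ p : (auxComplex JS).X 1,
        ((I : Submodule R R).mkQ (D1 p)) ∈ LinearMap.range s := by
      intro p
      have hDp : D1 p ∈ JS := auxMemJ JS p
      obtain ⟨i, hi, y, hy, hiy⟩ := Submodule.mem_sup.1 hDp
      obtain ⟨r, hr⟩ := Submodule.mem_span_singleton.1 hy
      refine ⟨Submodule.Quotient.mk r, ?_⟩
      rw [hsmk, Submodule.mkQ_apply]
      rw [Submodule.Quotient.eq]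
      have : r • x - D1 p = -i := by rw [← hiy, hr]; ring
      rw [this]
      exact Submodule.neg_mem _ hi
    set f : ((auxComplex JS).X 1 : Type u) →ₗ[R] (R ⧸ (K : Submodule R R)) :=
      (LinearEquiv.ofInjective s hs).symm.toLinearMap ∘ₗ
        LinearMap.codRestrict (LinearMap.range s)
          ((I : Submodule R R).mkQ ∘ₗ D1) hmemrange with hfdef
    have hkey : ∀ p : (auxComplex JS).X 1,
        s (f p) = (I : Submodule R R).mkQ (D1 p) := by
      intro p
      have h2 := congrArg Subtype.val
        ((LinearEquiv.ofInjective s hs).apply_symm_apply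
          (LinearMap.codRestrict (LinearMap.range s)
            ((I : Submodule R R).mkQ ∘ₗ D1) hmemrange p))
      rw [LinearEquiv.ofInjective_apply] at h2
      exact h2
    have hf0 : ∀ p : (auxComplex JS).X 1, D1 p ∈ I → f p = 0 := by
      intro p hp
      apply hs
      rw [hkey, map_zero, Submodule.mkQ_apply, Submodule.Quotient.mk_eq_zero]
      exact hp
    have hf1 : ∀ p : (auxComplex JS).X 1, D1 p = x →
        f p = Submodule.Quotient.mk 1 := by
      intro p hp
      apply hs
      rw [hkey, hsmk, hp, Submodule.mkQ_apply, one_smul]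
    have hfd2 : ∀ v : (auxComplex JS).X 2,
        f (((auxComplex JS).d 2 1).hom v) = 0 := by
      intro v
      apply hs
      rw [hkey, map_zero]
      have h0 : (auxComplex JS).d 2 1 ≫ (auxComplex JS).d 1 0 = 0 :=
        HomologicalComplex.d_comp_d _ 2 1 0
      have h1 : ((auxComplex JS).d 1 0) (((auxComplex JS).d 2 1) v) = 0 := by
        have h2 : D1 ∘ₗ ((auxComplex JS).d 2 1).hom = 0 :=
          congrArg ModuleCat.Hom.hom h0
        exact DFunLike.congr_fun h2 v
      rw [Submodule.mkQ_apply]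
      change Submodule.Quotient.mk (((auxComplex JS).d 1 0) (((auxComplex JS).d 2 1) v)) = _
      rw [h1]
      rfl
    have lamA : ∀ v ∈ I • (⊤ : Submodule R M),
        ∃ u : TensorProduct R M ((auxComplex JS).X 1),
          LinearMap.lTensor M D1 u = v ⊗ₜ (1 : R) ∧ LinearMap.lTensor M f u = 0 := by
      intro v hv
      refine Submodule.smul_induction_on hv ?_ ?_
      · intro r hr nn _
        obtain ⟨p, hp⟩ := auxRange JS r (Ideal.mem_sup_left hr)
        refine ⟨nn ⊗ₜ p, ?_, ?_⟩
        · rw [LinearMap.lTensor_tmul]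
          rw [show D1 p = r from hp, TensorProduct.smul_tmul, smul_eq_mul, mul_one]
        · rw [LinearMap.lTensor_tmul, hf0 p (by rw [show D1 p = r from hp]; exact hr),
            TensorProduct.tmul_zero]
      · rintro a b ⟨u₁, h₁, h₁'⟩ ⟨u₂, h₂, h₂'⟩
        exact ⟨u₁ + u₂, by rw [map_add, h₁, h₂, TensorProduct.add_tmul],
          by rw [map_add, h₁', h₂', add_zero]⟩
    obtain ⟨u, hu1, hu2⟩ := lamA _ hm
    obtain ⟨px, hpx⟩ := auxRange JS x
      (Ideal.mem_sup_right (Ideal.mem_span_singleton_self x))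
    have hz0 : LinearMap.lTensor M D1 (m ⊗ₜ px - u) = 0 := by
      rw [map_sub, LinearMap.lTensor_tmul, show D1 px = x from hpx, hu1,
        TensorProduct.smul_tmul, smul_eq_mul, mul_one, sub_self]
    obtain ⟨v, hv⟩ := hex _ hz0
    have hcomp0 : f ∘ₗ ((auxComplex JS).d 2 1).hom = 0 := LinearMap.ext hfd2
    have hfz : LinearMap.lTensor M f (m ⊗ₜ px - u) = 0 := by
      rw [← hv, ← LinearMap.lTensor_comp_apply, hcomp0, LinearMap.lTensor_zero,
        LinearMap.zero_apply]
    rw [map_sub, LinearMap.lTensor_tmul, hf1 px hpx, hu2, sub_zero] at hfz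
    have hfin := congrArg (TensorProduct.tensorQuotEquivQuotSMul M K) hfz
    rw [map_zero] at hfin
    rw [show (Submodule.Quotient.mk 1 : R ⧸ (K : Submodule R R)) =
      Ideal.Quotient.mk K 1 from rfl] at hfin
    rw [TensorProduct.tensorQuotEquivQuotSMul_tmul_mk, one_smul] at hfin
    exact (Submodule.Quotient.mk_eq_zero _).1 hfin
  · -- easy direction
    refine Submodule.smul_le.2 (fun r hr nn _ => ?_)
    rw [Submodule.mem_comap, LinearMap.lsmul_apply, smul_smul]
    refine Submodule.smul_mem_smul ?_ trivial
    rw [mul_comm]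
    exact Ideal.mem_colon_span_singleton.1 hr
end

section
/- Let (R,m) be a Noetherian local ring of prime characteristic p and I ⊆ R an irreducible m-primary ideal. If R → S is a faithfully flat local ring map with mS the maximal ideal of S, then IS is an irreducible mS-primary ideal of S. -/
open IsLocalRing CategoryTheory TensorProduct

universe u

section AuxFlat

variable {R S : Type u} [CommRing R] [CommRing S] [Algebra R S]

/-- A pure tensor `t ⊗ v` vanishes if `t ∈ J•⊤` and `J` kills `v`. -/
lemma aux_tmul_zero {N : Type u} [AddCommGroup N] [Module R N] {J : Ideal R} {t : S}
    (ht : t ∈ J • (⊤ : Submodule R S)) {v : N} (hv : ∀ a ∈ J, a • v = 0) :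
    t ⊗ₜ[R] v = (0 : S ⊗[R] N) := by
  refine Submodule.smul_induction_on ht ?_ ?_
  · intro a ha s _
    rw [TensorProduct.smul_tmul, hv a ha, TensorProduct.tmul_zero]
  · intro x y hx hy
    rw [TensorProduct.add_tmul, hx, hy, add_zero]

lemma aux_mem_smul_top {I : Ideal R} {t : S} (ht : t ∈ I.map (algebraMap R S)) :
    t ∈ I • (⊤ : Submodule R S) := by
  rw [Ideal.smul_top_eq_map]
  exact ht

lemma aux_mk_smul_zero (I : Ideal R) {a : R} (ha : a ∈ I) :
    a • (Submodule.Quotient.mk (1 : R) : R ⧸ (I : Submodule R R)) = 0 := by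
  rw [← Submodule.Quotient.mk_smul, smul_eq_mul, mul_one, Submodule.Quotient.mk_eq_zero]
  exact ha

/-- Faithfully flat descent of ideal membership. -/
lemma aux_ff_mem (hff : Module.FaithfullyFlat R S) (I : Ideal R) (r : R)
    (hr : algebraMap R S r ∈ I.map (algebraMap R S)) : r ∈ I := by
  haveI := hff
  by_contra hrI
  have h1 : (1 : S) ⊗ₜ[R] (Submodule.Quotient.mk r : R ⧸ (I : Submodule R R)) = 0 := by
    have e0 : (Submodule.Quotient.mk r : R ⧸ (I : Submodule R R)) =
        r • Submodule.Quotient.mk (1 : R) := by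
      rw [← Submodule.Quotient.mk_smul, smul_eq_mul, mul_one]
    rw [e0, TensorProduct.tmul_smul, TensorProduct.smul_tmul', Algebra.smul_def, mul_one]
    exact aux_tmul_zero (aux_mem_smul_top hr) (fun a ha => aux_mk_smul_zero I ha)
  have h2 : ∀ w : S, w ⊗ₜ[R] (Submodule.Quotient.mk r : R ⧸ (I : Submodule R R)) = 0 := by
    intro w
    have : w ⊗ₜ[R] (Submodule.Quotient.mk r : R ⧸ (I : Submodule R R)) =
        w • ((1 : S) ⊗ₜ[R] (Submodule.Quotient.mk r : R ⧸ (I : Submodule R R))) := by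
      rw [TensorProduct.smul_tmul', smul_eq_mul, mul_one]
    rw [this, h1, smul_zero]
  set g : R →ₗ[R] R ⧸ (I : Submodule R R) :=
    LinearMap.toSpanSingleton R _ (Submodule.Quotient.mk r) with hg
  have h0 : LinearMap.lTensor S g = 0 := by
    refine TensorProduct.ext' fun t c => ?_
    rw [LinearMap.lTensor_tmul, LinearMap.zero_apply, hg,
      LinearMap.toSpanSingleton_apply, TensorProduct.tmul_smul, h2 t, smul_zero]
  have := (Module.FaithfullyFlat.zero_iff_lTensor_zero R S g).2 h0
  have h3 : g 1 = 0 := by rw [this]; rfl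
  rw [hg, LinearMap.toSpanSingleton_apply, one_smul, Submodule.Quotient.mk_eq_zero] at h3
  exact hrI h3

/-- Flat base change of the colon ideal (one inclusion, elementwise). -/
lemma aux_flat_colon [Module.Flat R S] (I A : Ideal R) {n : ℕ} (x : Fin n → R)
    (hwd : ∀ a ∈ A, ∀ i, x i * a ∈ I)
    (hker : ∀ r : R, (∀ i, x i * r ∈ I) → r ∈ A)
    (s : S) (hs : ∀ i, algebraMap R S (x i) * s ∈ I.map (algebraMap R S)) :
    s ∈ A.map (algebraMap R S) := by
  classical
  set φ₀ : R →ₗ[R] (Fin n → R ⧸ (I : Submodule R R)) :=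
    LinearMap.pi (fun i => (I : Submodule R R).mkQ ∘ₗ LinearMap.lsmul R R (x i)) with hφ₀
  have hle : (A : Submodule R R) ≤ LinearMap.ker φ₀ := by
    intro a ha
    rw [LinearMap.mem_ker]
    funext i
    show Submodule.Quotient.mk (x i • a) = (0 : R ⧸ (I : Submodule R R))
    rw [Submodule.Quotient.mk_eq_zero, smul_eq_mul]
    exact hwd a ha i
  set φ := Submodule.liftQ (A : Submodule R R) φ₀ hle with hφ
  have hinj : Function.Injective φ := by
    rw [← LinearMap.ker_eq_bot, hφ]
    refine Submodule.ker_liftQ_eq_bot _ _ _ ?_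
    intro r hr
    rw [LinearMap.mem_ker] at hr
    refine hker r fun i => ?_
    have := congrFun hr i
    rw [show φ₀ r i = Submodule.Quotient.mk (x i • r) from rfl] at this
    rw [← smul_eq_mul, ← Submodule.Quotient.mk_eq_zero (I : Submodule R R)]
    exact this
  have hφT := Module.Flat.lTensor_preserves_injective_linearMap (M := S) φ hinj
  have key : (LinearMap.lTensor S φ)
      (s ⊗ₜ[R] (Submodule.Quotient.mk 1 : R ⧸ (A : Submodule R R))) = 0 := by
    rw [LinearMap.lTensor_tmul]
    have e1 : φ (Submodule.Quotient.mk 1) =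
        fun i => (Submodule.Quotient.mk (x i) : R ⧸ (I : Submodule R R)) := by
      rw [hφ, Submodule.liftQ_apply]
      funext i
      show Submodule.Quotient.mk (x i • (1:R)) = _
      rw [smul_eq_mul, mul_one]
    rw [e1]
    have e2 : (fun i => (Submodule.Quotient.mk (x i) : R ⧸ (I : Submodule R R))) =
        ∑ i : Fin n, Pi.single i (Submodule.Quotient.mk (x i)) := by
      rw [Finset.univ_sum_single]
    rw [e2, TensorProduct.tmul_sum]
    refine Finset.sum_eq_zero fun i _ => ?_
    have e3 : (Pi.single i (Submodule.Quotient.mk (x i)) :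
        Fin n → R ⧸ (I : Submodule R R)) =
        x i • (Pi.single i (Submodule.Quotient.mk 1) : Fin n → R ⧸ (I : Submodule R R)) := by
      rw [← Pi.single_smul]
      congr 1
      rw [← Submodule.Quotient.mk_smul, smul_eq_mul, mul_one]
    rw [e3, TensorProduct.tmul_smul, TensorProduct.smul_tmul', Algebra.smul_def]
    refine aux_tmul_zero (aux_mem_smul_top (hs i)) fun a ha => ?_
    rw [← Pi.single_smul, aux_mk_smul_zero I ha, Pi.single_zero]
  have hzero : s ⊗ₜ[R] (Submodule.Quotient.mk 1 : R ⧸ (A : Submodule R R)) = 0 := by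
    apply hφT
    rw [key, map_zero]
  have h4 : s ∈ A • (⊤ : Submodule R S) := by
    have := congrArg (TensorProduct.tensorQuotEquivQuotSMul S A) hzero
    rw [map_zero] at this
    have e4 : (TensorProduct.tensorQuotEquivQuotSMul S A)
        (s ⊗ₜ[R] (Submodule.Quotient.mk 1 : R ⧸ (A : Submodule R R))) =
        Submodule.Quotient.mk s := by
      show (TensorProduct.quotTensorEquivQuotSMul S A)
        ((TensorProduct.comm R S _) (s ⊗ₜ (Submodule.Quotient.mk 1))) = _
      rw [TensorProduct.comm_tmul]
      have := TensorProduct.quotTensorEquivQuotSMul_mk_tmul (M := S) A 1 s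
      rw [one_smul] at this
      exact this
    rw [e4] at this
    rwa [Submodule.Quotient.mk_eq_zero] at this
  rwa [Ideal.smul_top_eq_map] at h4

end AuxFlat

/-- Irreducible `m`-primary ideals stay irreducible and `mS`-primary under a faithfully flat
local map with `mS` the maximal ideal of `S`. -/
theorem map_irreducible_ideal (R S : Type u) [CommRing R] [CommRing S] [IsLocalRing R]
    [IsLocalRing S] [IsNoetherianRing R] (p : ℕ) [Fact p.Prime] [CharP R p] [Algebra R S]
    (hff : Module.FaithfullyFlat R S) (hloc : IsLocalHom (algebraMap R S))
    (hmax : (maximalIdeal R).map (algebraMap R S) = maximalIdeal S)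
    (I : Ideal R) (hI₁ : I ≤ maximalIdeal R) (hI₂ : ∃ n, maximalIdeal R ^ n ≤ I)
    (hirr : ∀ J K : Ideal R, I = J ⊓ K → I = J ∨ I = K) :
    (I.map (algebraMap R S) ≤ maximalIdeal S ∧
      ∃ n, maximalIdeal S ^ n ≤ I.map (algebraMap R S)) ∧
    ∀ J K : Ideal S, I.map (algebraMap R S) = J ⊓ K →
      I.map (algebraMap R S) = J ∨ I.map (algebraMap R S) = K := by
  classical
  haveI := hff
  haveI : Module.Flat R S := hff.toFlat
  set f := algebraMap R S with hf
  set IS := I.map f with hIS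
  -- part 1
  have part1a : IS ≤ maximalIdeal S := hmax ▸ Ideal.map_mono hI₁
  have part1b : ∃ n, maximalIdeal S ^ n ≤ IS := by
    obtain ⟨n, hn⟩ := hI₂
    exact ⟨n, by rw [← hmax, ← Ideal.map_pow]; exact Ideal.map_mono hn⟩
  refine ⟨⟨part1a, part1b⟩, ?_⟩
  -- I is proper
  have hIne : I ≠ ⊤ := by
    intro h
    exact (maximalIdeal.isMaximal R).ne_top (top_le_iff.1 (h ▸ hI₁))
  -- socle element u of R/I
  obtain ⟨u, hu, hsu⟩ : ∃ u : R, u ∉ I ∧ ∀ z ∈ maximalIdeal R, z * u ∈ I := by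
    obtain ⟨n, hn⟩ := hI₂
    have hex : ∃ t, maximalIdeal R ^ t ≤ I := ⟨n, hn⟩
    set t := Nat.find hex with ht
    have hts : maximalIdeal R ^ t ≤ I := Nat.find_spec hex
    have ht0 : t ≠ 0 := by
      intro h
      rw [h, pow_zero, Ideal.one_eq_top] at hts
      exact hIne (top_le_iff.1 hts)
    have htm : ¬ maximalIdeal R ^ (t - 1) ≤ I := Nat.find_min hex (by omega)
    obtain ⟨v, hv1, hv2⟩ := SetLike.not_le_iff_exists.1 htm
    refine ⟨v, hv2, fun z hz => ?_⟩
    have : z * v ∈ maximalIdeal R * maximalIdeal R ^ (t - 1) :=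
      Ideal.mul_mem_mul hz hv1
    rw [← pow_succ'] at this
    have htt : t - 1 + 1 = t := by omega
    rw [htt] at this
    exact hts this
  -- the socle is one-dimensional: A = I + (u) contains every socle element
  set A : Ideal R := I ⊔ Ideal.span {u} with hA
  have hone : ∀ u' : R, u' ∉ I → (∀ z ∈ maximalIdeal R, z * u' ∈ I) → u' ∈ A := by
    intro u' hu' hmu'
    by_contra hnotin
    have hJK : I = (I ⊔ Ideal.span {u}) ⊓ (I ⊔ Ideal.span {u'}) := by
      refine le_antisymm (le_inf le_sup_left le_sup_left) ?_
      rintro y ⟨hy1, hy2⟩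
      obtain ⟨a, ha, b, hb, rfl⟩ := Submodule.mem_sup.1 hy1
      obtain ⟨r, hr⟩ := Ideal.mem_span_singleton'.1 hb
      obtain ⟨a', ha', b', hb', hy'⟩ := Submodule.mem_sup.1 hy2
      obtain ⟨r', hr'⟩ := Ideal.mem_span_singleton'.1 hb'
      by_cases hrm : r ∈ maximalIdeal R
      · exact I.add_mem ha (hr ▸ hsu r hrm)
      · by_cases hrm' : r' ∈ maximalIdeal R
        · rw [← hy']
          exact I.add_mem ha' (hr' ▸ hmu' r' hrm')
        · exfalso
          apply hnotin
          have hru : IsUnit r' := by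
            by_contra hnu
            exact hrm' ((mem_maximalIdeal r').2 hnu)
          obtain ⟨c, hc⟩ := hru.exists_left_inv
          have h2 : r' * u' = a + r * u - a' := by
            have : a' + r' * u' = a + r * u := by rw [hr, hr']; exact hy'
            exact eq_sub_of_add_eq' this
          have h3 : u' = c * (a - a') + c * r * u := by
            calc u' = (c * r') * u' := by rw [hc, one_mul]
              _ = c * (r' * u') := by ring
              _ = c * (a + r * u - a') := by rw [h2]
              _ = c * (a - a') + c * r * u := by ring
          rw [hA]
          refine Submodule.mem_sup.2 ⟨c * (a - a'), I.mul_mem_left c (I.sub_mem ha ha'),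
            c * r * u, Ideal.mem_span_singleton'.2 ⟨c * r, rfl⟩, h3.symm⟩
    rcases hirr _ _ hJK with h | h
    · exact hu (h ▸ Submodule.mem_sup.2 ⟨0, I.zero_mem, u,
        Ideal.mem_span_singleton'.2 ⟨1, one_mul u⟩, zero_add u⟩)
    · exact hu' (h ▸ Submodule.mem_sup.2 ⟨0, I.zero_mem, u',
        Ideal.mem_span_singleton'.2 ⟨1, one_mul u'⟩, zero_add u'⟩)
  -- generators of the maximal ideal
  obtain ⟨n, x, hx⟩ := Submodule.fg_iff_exists_fin_generating_family.1
    (IsNoetherian.noetherian (maximalIdeal R : Submodule R R))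
  have hxm : ∀ i, x i ∈ maximalIdeal R := by
    intro i
    rw [← hx]
    exact Submodule.subset_span ⟨i, rfl⟩
  -- the two hypotheses for the flat colon lemma
  have hwd : ∀ a ∈ A, ∀ i, x i * a ∈ I := by
    intro a ha i
    obtain ⟨b, hb, c, hc, rfl⟩ := Submodule.mem_sup.1 ha
    obtain ⟨r, rfl⟩ := Ideal.mem_span_singleton'.1 hc
    have h1 : x i * b ∈ I := I.mul_mem_left (x i) hb
    have h2 : x i * (r * u) ∈ I := by
      have := hsu (x i) (hxm i)
      have : r * (x i * u) ∈ I := I.mul_mem_left r this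
      rw [show x i * (r * u) = r * (x i * u) from by ring]
      exact this
    rw [mul_add]
    exact I.add_mem h1 h2
  have hker : ∀ r : R, (∀ i, x i * r ∈ I) → r ∈ A := by
    intro r hi
    have hzr : ∀ z ∈ maximalIdeal R, z * r ∈ I := by
      intro z hz
      have hle : Submodule.span R (Set.range x) ≤
          Submodule.comap (LinearMap.toSpanSingleton R R r) (I : Submodule R R) := by
        rw [Submodule.span_le]
        rintro _ ⟨i, rfl⟩
        simp only [SetLike.mem_coe, Submodule.mem_comap, LinearMap.toSpanSingleton_apply,
          smul_eq_mul]
        exact hi i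
      have hzmem : z ∈ Submodule.span R (Set.range x) := by rw [hx]; exact hz
      have := hle hzmem
      simpa [smul_eq_mul] using this
    by_cases hrI : r ∈ I
    · exact le_sup_left (a := I) hrI
    · exact hone r hrI hzr
  -- S-side socle element
  set u' := f u with hu'
  have hu'notin : u' ∉ IS := fun h => hu (aux_ff_mem hff I u h)
  have hmuspan : maximalIdeal R * Ideal.span {u} ≤ I := by
    rw [Ideal.mul_le]
    intro z hz v hv
    obtain ⟨r, rfl⟩ := Ideal.mem_span_singleton'.1 hv
    rw [show z * (r * u) = r * (z * u) from by ring]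
    exact I.mul_mem_left r (hsu z hz)
  have hmu' : ∀ w ∈ maximalIdeal S, w * u' ∈ IS := by
    intro w hw
    rw [← hmax] at hw
    have h1 : u' ∈ (Ideal.span {u}).map f := Ideal.mem_map_of_mem f (Ideal.subset_span rfl)
    have h2 : w * u' ∈ (maximalIdeal R).map f * (Ideal.span {u}).map f :=
      Ideal.mul_mem_mul hw h1
    rw [← Ideal.map_mul] at h2
    exact Ideal.map_mono hmuspan h2
  -- every ideal strictly containing IS contains u'
  have hsub : ∀ J : Ideal S, IS ≤ J → IS ≠ J → u' ∈ J := by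
    intro J hle hne
    obtain ⟨x₀, hx₀J, hx₀IS⟩ := SetLike.exists_of_lt (lt_of_le_of_ne hle hne)
    obtain ⟨N, hN⟩ := part1b
    have hex : ∃ k, ∀ z ∈ maximalIdeal S ^ k, z * x₀ ∈ IS :=
      ⟨N, fun z hz => Ideal.mul_mem_right x₀ _ (hN hz)⟩
    set t := Nat.find hex with htdef
    have hts : ∀ z ∈ maximalIdeal S ^ t, z * x₀ ∈ IS := Nat.find_spec hex
    have ht0 : t ≠ 0 := by
      intro h
      apply hx₀IS
      have := hts 1 (by rw [h, pow_zero, Ideal.one_eq_top]; trivial)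
      rwa [one_mul] at this
    have htm : ¬ ∀ z ∈ maximalIdeal S ^ (t - 1), z * x₀ ∈ IS := Nat.find_min hex (by omega)
    push_neg at htm
    obtain ⟨z, hz1, hz2⟩ := htm
    set y := z * x₀ with hy
    have hyJ : y ∈ J := J.mul_mem_left z hx₀J
    have hymu : ∀ w ∈ maximalIdeal S, w * y ∈ IS := by
      intro w hw
      have hwz : w * z ∈ maximalIdeal S ^ t := by
        have : w * z ∈ maximalIdeal S * maximalIdeal S ^ (t - 1) :=
          Ideal.mul_mem_mul hw hz1
        rw [← pow_succ'] at this
        have htt : t - 1 + 1 = t := by omega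
        rwa [htt] at this
      have := hts (w * z) hwz
      rwa [show w * z * x₀ = w * y from by rw [hy]; ring] at this
    -- apply the flat colon lemma
    have hyA : y ∈ A.map f := by
      refine aux_flat_colon I A x hwd hker y fun i => ?_
      exact hymu (f (x i)) (by rw [← hmax]; exact Ideal.mem_map_of_mem f (hxm i))
    rw [hA, Ideal.map_sup, Ideal.map_span, Set.image_singleton] at hyA
    obtain ⟨a, haIS, b, hb, hab⟩ := Submodule.mem_sup.1 hyA
    obtain ⟨s, hs⟩ := Ideal.mem_span_singleton'.1 hb
    by_cases hsm : s ∈ maximalIdeal S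
    · exfalso
      apply hz2
      rw [← hab, ← hs]
      exact Ideal.add_mem _ haIS (hmu' s hsm)
    · have hsu' : IsUnit s := by
        by_contra hnu
        exact hsm ((mem_maximalIdeal s).2 hnu)
      obtain ⟨c, hc⟩ := hsu'.exists_left_inv
      have h3 : u' = c * y - c * a := by
        calc u' = (c * s) * u' := by rw [hc, one_mul]
          _ = c * (s * u') := by ring
          _ = c * (a + s * u') - c * a := by ring
          _ = c * y - c * a := by rw [hs, hab]
      rw [h3]
      exact J.sub_mem (J.mul_mem_left c hyJ) (J.mul_mem_left c (hle haIS))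
  -- conclude irreducibility
  intro J K hJK
  by_cases hJ : IS = J
  · exact Or.inl hJ
  · right
    by_contra hK
    have hJle : IS ≤ J := hJK ▸ inf_le_left
    have hKle : IS ≤ K := hJK ▸ inf_le_right
    have h1 := hsub J hJle hJ
    have h2 := hsub K hKle hK
    exact hu'notin (hJK ▸ (Submodule.mem_inf.2 ⟨h1, h2⟩))
end
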